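/- arXiv:1305.4548 — 2 statements merged into one kernel-verified Lean document; each statement's English description precedes it below -/
import Mathlib

section
/- Consider the update Q(t+1) = (I − δ(t)A(t))Q(t) − δ(t)B(t)Y(t) + δ(t)W(t)Y(t) with Q_i(0) = e_{X_i} for initial samples X_i ∈ [M], where Q(t) is F_t-measurable, the sampling distribution satisfies P(t) = Q(t) (so E[Y(t) | F_t] = Q(t)), W(t) and B(t) are conditionally independent of Y(t) given F_t, and the conditional-mean weight matrices satisfy the column-balance condition Σ_i W̄_ij(t) − Ā_jj(t) − B̄_jj(t) = 0 for all j and t. Then for all t, E[𝟏ᵀ Q(t)] = 𝟏ᵀ Q(0) = nΠ, where Π = (1/n) Σ_{i=1}^n e_{X_i} is the empirical distribution of the initial samples. -/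
open MeasureTheory Matrix

/-- Under the hypotheses of Lemma 2 (update rule with `P(t) = Q(t)`,
conditional independence of `W(t), B(t)` from `Y(t)`, and balanced column sums), with initial
condition `Q_i(0) = e_{X_i}`, the expected column sums are preserved:
`E[𝟏ᵀQ(t)] = 𝟏ᵀQ(0) = nΠ`, where `Π` is the empirical distribution of the `X_i`. -/
theorem expected_column_sums_preserved {Ω : Type*} {m0 : MeasurableSpace Ω}
    {μ : Measure Ω} [IsProbabilityMeasure μ]
    {n M : ℕ} (ℱ : Filtration ℕ m0)
    (X : Fin n → Fin M) (Pi : Fin M → ℝ)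
    (hPi : ∀ m, Pi m = (1 / n : ℝ) * ∑ i, if X i = m then 1 else 0)
    (Q Y : ℕ → Ω → Matrix (Fin n) (Fin M) ℝ)
    (A B W Abar Bbar Wbar : ℕ → Ω → Matrix (Fin n) (Fin n) ℝ)
    (δ : ℕ → ℝ)
    (hAdiag : ∀ t ω, (A t ω).IsDiag) (hBdiag : ∀ t ω, (B t ω).IsDiag)
    -- initial condition: `Q_i(0) = e_{X_i}`
    (hQ0 : ∀ ω i m, Q 0 ω i m = if X i = m then 1 else 0)
    -- `Q(t)` is `F_t`-measurable
    (hQmeas : ∀ t i j, Measurable[ℱ t] fun ω => Q t ω i j)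
    -- the update rule
    (hupdate : ∀ t ω, Q (t+1) ω = ((1 : Matrix (Fin n) (Fin n) ℝ) - δ t • A t ω) * Q t ω
      - δ t • (B t ω * Y t ω) + δ t • (W t ω * Y t ω))
    -- the sampling distribution satisfies `P(t) = Q(t)`: `E[Y(t)|F_t] = Q(t)`
    (hY : ∀ t i j, μ[fun ω => Y t ω i j | ℱ t] =ᵐ[μ] fun ω => Q t ω i j)
    -- conditional-mean weight matrices
    (hAbar : ∀ t i j, μ[fun ω => A t ω i j | ℱ t] =ᵐ[μ] fun ω => Abar t ω i j)
    (hBbar : ∀ t i j, μ[fun ω => B t ω i j | ℱ t] =ᵐ[μ] fun ω => Bbar t ω i j)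
    (hWbar : ∀ t i j, μ[fun ω => W t ω i j | ℱ t] =ᵐ[μ] fun ω => Wbar t ω i j)
    -- conditional independence of `W(t), B(t)` and `Y(t)` given `F_t`, in the form
    -- `E[(W(t) − B(t))Y(t) | F_t] = (W̄(t) − B̄(t))Q(t)`
    (hWBY : ∀ t i j, μ[fun ω => ((W t ω - B t ω) * Y t ω) i j | ℱ t]
      =ᵐ[μ] fun ω => ((Wbar t ω - Bbar t ω) * Q t ω) i j)
    -- balanced column sums
    (hbal : ∀ t ω j, ∑ i, Wbar t ω i j - Abar t ω j j - Bbar t ω j j = 0)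
    -- integrability of the relevant quantities
    (hIntQ : ∀ t i m, Integrable (fun ω => Q t ω i m) μ)
    (hIntA : ∀ t j, Integrable (fun ω => A t ω j j) μ)
    (hIntAQ : ∀ t j m, Integrable (fun ω => A t ω j j * Q t ω j m) μ)
    (hIntWBY : ∀ t i m, Integrable (fun ω => ((W t ω - B t ω) * Y t ω) i m) μ) :
    ∀ t m, ∫ ω, (∑ i, Q t ω i m) ∂μ = n * Pi m := by 
  have hle : ∀ s : ℕ, (ℱ s : MeasurableSpace Ω) ≤ m0 := fun s => ℱ.le s
  intro t m
  induction t with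
  | zero =>
    have hconst : (fun ω => ∑ i, Q 0 ω i m)
        = fun _ : Ω => ∑ i, (if X i = m then (1:ℝ) else 0) := by
      funext ω; exact Finset.sum_congr rfl fun i _ => hQ0 ω i m
    rw [hconst, integral_const, probReal_univ, one_smul, hPi]
    rcases eq_or_ne (n : ℝ) 0 with h0 | h0
    · have hn : n = 0 := by exact_mod_cast h0
      subst hn
      simp only [Nat.cast_zero, zero_mul]
      exact Finset.sum_of_isEmpty _
    · field_simp
  | succ t ih =>
    -- pointwise expansion of the update rule, summed over the column index
    have hpt : ∀ ω, (∑ i, Q (t+1) ω i m)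
        = (∑ i, Q t ω i m) - δ t * (∑ i, A t ω i i * Q t ω i m)
          + δ t * (∑ i, ((W t ω - B t ω) * Y t ω) i m) := by
      intro ω
      have hent : ∀ i, Q (t+1) ω i m
          = Q t ω i m - δ t * (A t ω i i * Q t ω i m)
            + δ t * (((W t ω - B t ω) * Y t ω) i m) := by
        intro i
        have hAQ : (A t ω * Q t ω) i m = A t ω i i * Q t ω i m := by
          rw [Matrix.mul_apply]
          rw [Finset.sum_eq_single i]
          · intro b _ hb
            rw [hAdiag t ω (Ne.symm hb), zero_mul]
          · intro h; exact absurd (Finset.mem_univ i) h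
        have hsub : ((W t ω - B t ω) * Y t ω) i m
            = (W t ω * Y t ω) i m - (B t ω * Y t ω) i m := by
          rw [Matrix.sub_mul, Matrix.sub_apply]
        rw [hupdate t ω]
        simp only [Matrix.sub_mul, Matrix.one_mul, Matrix.smul_mul, Matrix.add_apply,
          Matrix.sub_apply, Matrix.smul_apply, smul_eq_mul, hAQ, hsub]
        ring
      rw [Finset.sum_congr rfl fun i _ => hent i, Finset.sum_add_distrib,
        Finset.sum_sub_distrib, ← Finset.mul_sum, ← Finset.mul_sum]
    -- integrability facts
    have hIQ : Integrable (fun ω => ∑ i, Q t ω i m) μ :=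
      integrable_finset_sum _ fun i _ => hIntQ t i m
    have hIAQ : Integrable (fun ω => ∑ i, A t ω i i * Q t ω i m) μ :=
      integrable_finset_sum _ fun i _ => hIntAQ t i m
    have hIWBY : Integrable (fun ω => ∑ i, ((W t ω - B t ω) * Y t ω) i m) μ :=
      integrable_finset_sum _ fun i _ => hIntWBY t i m
    have h1 : Integrable (fun ω => (∑ i, Q t ω i m)
        - δ t * ∑ i, A t ω i i * Q t ω i m) μ := hIQ.sub (hIAQ.const_mul _)
    have h2 : Integrable (fun ω => δ t * ∑ i, ((W t ω - B t ω) * Y t ω) i m) μ :=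
      hIWBY.const_mul _
    have h3 : Integrable (fun ω => δ t * ∑ i, A t ω i i * Q t ω i m) μ :=
      hIAQ.const_mul _
    have hsplit : ∫ ω, (∑ i, Q (t+1) ω i m) ∂μ
        = (∫ ω, (∑ i, Q t ω i m) ∂μ)
          - δ t * (∫ ω, (∑ i, A t ω i i * Q t ω i m) ∂μ)
          + δ t * (∫ ω, (∑ i, ((W t ω - B t ω) * Y t ω) i m) ∂μ) := by
      rw [show (fun ω => ∑ i, Q (t+1) ω i m)
          = (fun ω => ((∑ i, Q t ω i m) - δ t * (∑ i, A t ω i i * Q t ω i m))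
            + δ t * (∑ i, ((W t ω - B t ω) * Y t ω) i m)) from funext hpt]
      rw [integral_add h1 h2, integral_sub hIQ h3, integral_const_mul, integral_const_mul]
    -- pull-out property for `A_{jj} Q_{jm}`
    have hpullA : ∀ j : Fin n, μ[fun ω => Q t ω j m * A t ω j j | ℱ t]
        =ᵐ[μ] fun ω => Q t ω j m * Abar t ω j j := by
      intro j
      have hmul := condExp_mul_of_stronglyMeasurable_left (m := ℱ t) (μ := μ)
        (f := fun ω => Q t ω j m) (g := fun ω => A t ω j j)
        ((hQmeas t j m).stronglyMeasurable)
        ((hIntAQ t j m).congr (Filter.Eventually.of_forall fun ω => mul_comm _ _))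
        (hIntA t j)
      filter_upwards [hmul, hAbar t j j] with ω hω1 hω2
      rw [show (fun ω => Q t ω j m * A t ω j j)
          = (fun ω => Q t ω j m) * (fun ω => A t ω j j) from rfl, hω1]
      simp only [_root_.Pi.mul_apply]
      rw [hω2]
    have hIntAbarQ : ∀ j : Fin n,
        Integrable (fun ω => Abar t ω j j * Q t ω j m) μ := fun j =>
      (((integrable_condExp (m := ℱ t)
          (f := fun ω => Q t ω j m * A t ω j j)).congr (hpullA j)).congr
        (Filter.Eventually.of_forall fun ω => mul_comm _ _))
    have hAQ_eq : ∀ j : Fin n, ∫ ω, A t ω j j * Q t ω j m ∂μ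
        = ∫ ω, Q t ω j m * Abar t ω j j ∂μ := by
      intro j
      have h1 : (∫ ω, A t ω j j * Q t ω j m ∂μ)
          = ∫ ω, (μ[fun ω => Q t ω j m * A t ω j j | ℱ t]) ω ∂μ := by
        rw [integral_condExp (hle t)]
        exact integral_congr_ae (Filter.Eventually.of_forall fun ω => mul_comm _ _)
      rw [h1]
      exact integral_congr_ae (hpullA j)
    -- `∫ (W-B)Y = ∫ (Wbar-Bbar)Q` entrywise
    have hWBY_eq : ∀ i : Fin n, ∫ ω, ((W t ω - B t ω) * Y t ω) i m ∂μ
        = ∫ ω, ((Wbar t ω - Bbar t ω) * Q t ω) i m ∂μ := by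
      intro i
      rw [← integral_condExp (hle t) (f := fun ω => ((W t ω - B t ω) * Y t ω) i m)]
      exact integral_congr_ae (hWBY t i m)
    -- a.e., `Bbar` is zero off the diagonal
    have hBoff : ∀ᵐ ω ∂μ, ∀ i j : Fin n, i ≠ j → Bbar t ω i j = 0 := by
      have h : ∀ i j : Fin n, i ≠ j → (fun ω => Bbar t ω i j) =ᵐ[μ] fun _ => (0:ℝ) := by
        intro i j hij
        have hB0 : (fun ω => B t ω i j) = fun _ : Ω => (0:ℝ) := by
          funext ω; exact hBdiag t ω hij
        have h2 := (hBbar t i j).symm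
        rw [hB0] at h2
        calc (fun ω => Bbar t ω i j) =ᵐ[μ] μ[(fun _ => (0:ℝ)) | ℱ t] := h2
          _ =ᵐ[μ] fun _ => (0:ℝ) := by rw [condExp_const (hle t)]
      have hall : ∀ᵐ ω ∂μ, ∀ p : Fin n × Fin n, p.1 ≠ p.2 → Bbar t ω p.1 p.2 = 0 := by
        rw [MeasureTheory.ae_all_iff]
        intro p
        by_cases hp : p.1 ≠ p.2
        · filter_upwards [h p.1 p.2 hp] with ω hω _; exact hω
        · filter_upwards with ω hne; exact absurd hne hp
      filter_upwards [hall] with ω hω i j hij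
      exact hω (i, j) hij
    -- a.e., column sums of `(Wbar-Bbar)Q` equal `∑_j Abar_jj Q_jm`
    have hcolsum : ∀ᵐ ω ∂μ, (∑ i, ((Wbar t ω - Bbar t ω) * Q t ω) i m)
        = ∑ j, Abar t ω j j * Q t ω j m := by
      filter_upwards [hBoff] with ω hω
      have expand : (∑ i, ((Wbar t ω - Bbar t ω) * Q t ω) i m)
          = ∑ j, (∑ i, (Wbar t ω i j - Bbar t ω i j)) * Q t ω j m := by
        simp only [Matrix.mul_apply, Matrix.sub_apply, Finset.sum_mul]
        rw [Finset.sum_comm]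
      rw [expand]
      refine Finset.sum_congr rfl fun j _ => ?_
      congr 1
      have hBsum : (∑ i, Bbar t ω i j) = Bbar t ω j j := by
        rw [Finset.sum_eq_single j]
        · intro b _ hb; exact hω b j hb
        · intro h; exact absurd (Finset.mem_univ j) h
      rw [Finset.sum_sub_distrib, hBsum]
      have := hbal t ω j
      linarith
    have hIntBarQ : ∀ i : Fin n,
        Integrable (fun ω => ((Wbar t ω - Bbar t ω) * Q t ω) i m) μ := fun i =>
      (integrable_condExp (f := fun ω => ((W t ω - B t ω) * Y t ω) i m)
        (m := ℱ t)).congr (hWBY t i m)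
    -- the two correction terms have equal integrals
    have hkey : (∫ ω, (∑ i, ((W t ω - B t ω) * Y t ω) i m) ∂μ)
        = ∫ ω, (∑ i, A t ω i i * Q t ω i m) ∂μ := by
      rw [integral_finset_sum _ (fun i _ => hIntWBY t i m),
        Finset.sum_congr rfl (fun i _ => hWBY_eq i),
        ← integral_finset_sum _ (fun i _ => hIntBarQ i),
        integral_congr_ae hcolsum,
        integral_finset_sum _ (fun j _ => hIntAbarQ j),
        integral_finset_sum _ (fun j _ => hIntAQ t j m)]
      refine Finset.sum_congr rfl fun j _ => ?_
      rw [hAQ_eq j]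
      exact integral_congr_ae (Filter.Eventually.of_forall fun ω => mul_comm _ _)
    rw [hsplit, hkey, ih]
    ring
end

section
/- Let G be an undirected graph on n nodes with neighborhoods N_i, and let messages Y_1, …, Y_n ∈ {0, e_1, …, e_M} ⊂ ℝ^M be arbitrary. Define N_i = #{j ∈ N_i : Y_j ≠ 0} and update Q_i(t+1) = Q_i(t) if Y_i = 0, and Q_i(t+1) = Q_i(t) − δ N_i Y_i + δ Σ_{j ∈ N_i} Y_j if Y_i ≠ 0, for any δ ∈ ℝ. Then the column sums are conserved: Σ_{i=1}^n Q_{i,m}(t+1) = Σ_{i=1}^n Q_{i,m}(t) for every m ∈ [M]; equivalently 𝟏ᵀ Q(t+1) = 𝟏ᵀ Q(t) on every sample path. -/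
open Matrix Finset

/-- The elementary (basis) row vector `e_m` of `ℝ^M`. -/
def elemVec {M : ℕ} (m : Fin M) : Fin M → ℝ := fun m' => if m' = m then 1 else 0

open scoped Classical in
/-- Mass exchange / mean preservation: for the censored exchange update
`Q_i(t+1) = Q_i(t)` if `Y_i = 0` and
`Q_i(t+1) = Q_i(t) − δ N_i Y_i + δ Σ_{j∈N_i} Y_j` if `Y_i ≠ 0`, where
`N_i = #{j ∈ N_i : Y_j ≠ 0}`, the column sums are conserved on every sample path:
`𝟏ᵀQ(t+1) = 𝟏ᵀQ(t)`. -/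
theorem column_sums_conserved {n M : ℕ}
    (G : SimpleGraph (Fin n)) [DecidableRel G.Adj]
    (δ : ℝ) (Q Qnext Y : Fin n → Fin M → ℝ)
    -- messages lie in `{0, e_1, …, e_M}`
    (hYval : ∀ i, Y i = 0 ∨ ∃ m, Y i = elemVec m)
    -- the update rule
    (hupd0 : ∀ i, Y i = 0 → Qnext i = Q i)
    (hupd1 : ∀ i, Y i ≠ 0 → ∀ m, Qnext i m
      = Q i m - δ * (((G.neighborFinset i).filter fun j => Y j ≠ 0).card : ℝ) * Y i m
        + δ * ∑ j ∈ G.neighborFinset i, Y j m) :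
    ∀ m, ∑ i, Qnext i m = ∑ i, Q i m := by
  intro m
  -- the signed interaction term
  set h : Fin n → Fin n → ℝ := fun i j =>
    if Y i ≠ 0 ∧ G.Adj i j ∧ Y j ≠ 0 then δ * (Y j m - Y i m) else 0 with hh
  have hterm : ∀ i, Qnext i m - Q i m = ∑ j, h i j := by
    intro i
    by_cases hYi : Y i = 0
    · simp [hupd0 i hYi, hh, hYi]
    · rw [hupd1 i hYi m]
      have hsum : ∑ j ∈ G.neighborFinset i, Y j m
          = ∑ j ∈ (G.neighborFinset i).filter (fun j => Y j ≠ 0), Y j m := by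
        rw [Finset.sum_filter_of_ne]
        intro j _ hjm hj0
        exact hjm (by rw [hj0]; rfl)
      have hrhs : ∑ j, h i j
          = ∑ j ∈ (G.neighborFinset i).filter (fun j => Y j ≠ 0),
              δ * (Y j m - Y i m) := by
        have hset : (G.neighborFinset i).filter (fun j => Y j ≠ 0)
            = Finset.univ.filter (fun j => G.Adj i j ∧ Y j ≠ 0) := by
          ext j; simp [SimpleGraph.mem_neighborFinset]
        rw [hset, Finset.sum_filter]
        apply Finset.sum_congr rfl
        intro j _
        simp [hh, hYi, and_assoc]
      set s := (G.neighborFinset i).filter (fun j => Y j ≠ 0) with hs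
      have hmain : ∑ j ∈ s, δ * (Y j m - Y i m)
          = δ * (∑ j ∈ s, Y j m) - δ * (s.card : ℝ) * Y i m := by
        simp only [mul_sub, Finset.sum_sub_distrib, Finset.mul_sum]
        congr 1
        rw [Finset.sum_const, nsmul_eq_mul]; ring
      rw [hrhs, hmain, hsum]; ring
  have hanti : ∀ i j, h j i = - h i j := by
    intro i j
    simp only [hh]
    by_cases hadj : G.Adj i j
    · by_cases hi : Y i = 0 <;> by_cases hj : Y j = 0 <;>
        simp [hadj, hadj.symm, hi, hj] <;> ring
    · have hadj' : ¬ G.Adj j i := fun h' => hadj h'.symm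
      simp [hadj, hadj']
  have hS : ∑ i, ∑ j, h i j = 0 := by
    have h1 : ∑ i, ∑ j, h i j = ∑ i, ∑ j, h j i := Finset.sum_comm
    have h2 : ∑ i, ∑ j, h j i = - ∑ i, ∑ j, h i j := by
      rw [← Finset.sum_neg_distrib]
      apply Finset.sum_congr rfl
      intro i _
      rw [← Finset.sum_neg_distrib]
      exact Finset.sum_congr rfl fun j _ => hanti i j
    linarith [h1, h2]
  have : ∑ i, (Qnext i m - Q i m) = 0 := by
    rw [Finset.sum_congr rfl fun i _ => hterm i]
    exact hS
  have := Finset.sum_sub_distrib (s := Finset.univ)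
    (f := fun i => Qnext i m) (g := fun i => Q i m) ▸ this
  linarith [this]
end
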